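/- Suppose Ω is strictly convex (every boundary point of Ω̄ is an extreme point of Ω̄) and f ∈ C(Ω̄). Then the convex envelope u of f satisfies u(x) = f(x) for every x ∈ ∂Ω; i.e., ∂Ω is contained in the contact set C(f). -/
import Mathlib


/-- If `Ω` is strictly convex (every boundary point of `closure Ω` is an extreme point of
`closure Ω`) and `f` is continuous, then the convex envelope `u` of `f` agrees with `f`
on the boundary `∂Ω`. -/
theorem boundary_subset_contact_set
    (d : ℕ) (Ω : Set (EuclideanSpace ℝ (Fin d)))
    (hΩo : IsOpen Ω) (hΩc : Convex ℝ Ω) (hΩb : Bornology.IsBounded Ω)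
    (hstrict : ∀ x ∈ frontier Ω, x ∈ Set.extremePoints ℝ (closure Ω))
    (f u : EuclideanSpace ℝ (Fin d) → ℝ)
    (hf : ContinuousOn f (closure Ω))
    (hu_cvx : ConvexOn ℝ (closure Ω) u)
    (hu_le : ∀ x ∈ closure Ω, u x ≤ f x)
    (hu_max : ∀ v : EuclideanSpace ℝ (Fin d) → ℝ, ConvexOn ℝ (closure Ω) v →
        (∀ x ∈ closure Ω, v x ≤ f x) → ∀ x ∈ closure Ω, v x ≤ u x) :
    ∀ x ∈ frontier Ω, u x = f x := by
  intro x₀ hx₀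
  have hx₀K : x₀ ∈ closure Ω := frontier_subset_closure hx₀
  have hKconv : Convex ℝ (closure Ω) := hΩc.closure
  have hKcomp : IsCompact (closure Ω) :=
    Metric.isCompact_of_isClosed_isBounded isClosed_closure hΩb.closure
  -- lower bound for f on the closure
  obtain ⟨z, hzK, hzmin⟩ := hKcomp.exists_isMinOn ⟨x₀, hx₀K⟩ hf
  have hmle : ∀ y ∈ closure Ω, f z ≤ f y := fun y hy => hzmin hy
  set G : Set (EuclideanSpace ℝ (Fin d) × ℝ) :=
    (fun y => (y, f y)) '' (closure Ω) with hG
  set H : Set (EuclideanSpace ℝ (Fin d) × ℝ) := convexHull ℝ G with hH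
  have hGH : ∀ y ∈ closure Ω, (y, f y) ∈ H := fun y hy =>
    subset_convexHull ℝ G ⟨y, hy, rfl⟩
  -- H is bounded below in the second coordinate
  have hHm : H ⊆ {p : EuclideanSpace ℝ (Fin d) × ℝ | f z ≤ p.2} := by
    apply convexHull_min
    · rintro p ⟨y, hy, rfl⟩
      exact hmle y hy
    · exact (convex_Ici (f z)).linear_preimage
        (LinearMap.snd ℝ (EuclideanSpace ℝ (Fin d)) ℝ)
  set w : EuclideanSpace ℝ (Fin d) → ℝ := fun x => sInf {r | (x, r) ∈ H} with hw
  have hbdd : ∀ x : EuclideanSpace ℝ (Fin d), BddBelow {r | (x, r) ∈ H} := fun x =>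
    ⟨f z, fun r hr => hHm hr⟩
  have hne : ∀ x ∈ closure Ω, {r | (x, r) ∈ H}.Nonempty := fun x hx => ⟨f x, hGH x hx⟩
  -- w is convex on the closure
  have hwconv : ConvexOn ℝ (closure Ω) w := by
    refine ⟨hKconv, fun x hx y hy a b ha hb hab => ?_⟩
    rw [smul_eq_mul, smul_eq_mul]
    refine le_of_forall_pos_le_add fun ε hε => ?_
    obtain ⟨r, hr, hrlt⟩ := exists_lt_of_csInf_lt (hne x hx)
      (lt_add_of_pos_right (w x) hε)
    obtain ⟨s, hs, hslt⟩ := exists_lt_of_csInf_lt (hne y hy)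
      (lt_add_of_pos_right (w y) hε)
    have hmem : (a • x + b • y, a * r + b * s) ∈ H := by
      have := (convex_convexHull ℝ G) hr hs ha hb hab
      simpa [Prod.smul_def, smul_eq_mul] using this
    have h1 : w (a • x + b • y) ≤ a * r + b * s := csInf_le (hbdd _) hmem
    have h2 : a * r ≤ a * (w x + ε) := mul_le_mul_of_nonneg_left hrlt.le ha
    have h3 : b * s ≤ b * (w y + ε) := mul_le_mul_of_nonneg_left hslt.le hb
    nlinarith [h1, h2, h3]
  have hwle : ∀ x ∈ closure Ω, w x ≤ f x := fun x hx => csInf_le (hbdd x) (hGH x hx)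
  -- key claim
  have hx₀ext : x₀ ∈ Set.extremePoints ℝ (closure Ω) := hstrict x₀ hx₀
  have hnot : x₀ ∉ convexHull ℝ (closure Ω \ {x₀}) :=
    ((hKconv.mem_extremePoints_iff_mem_diff_convexHull_diff.1 hx₀ext)).2
  have hkey : ∀ r : ℝ, (x₀, r) ∈ H → r = f x₀ := by
    intro r hr
    set G₁ : Set (EuclideanSpace ℝ (Fin d) × ℝ) :=
      (fun y => (y, f y)) '' (closure Ω \ {x₀}) with hG₁
    have hK' : closure Ω = insert x₀ (closure Ω \ {x₀}) := by
      rw [Set.insert_diff_singleton, Set.insert_eq_self.2 hx₀K]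
    have hGeq : G = insert (x₀, f x₀) G₁ := by
      rw [hG, hK', Set.image_insert_eq]
    rcases G₁.eq_empty_or_nonempty with h1 | h1
    · have hGs : G = {(x₀, f x₀)} := by rw [hGeq, h1]; simp
      rw [hH, hGs, convexHull_singleton] at hr
      have := Set.mem_singleton_iff.1 hr
      exact (Prod.ext_iff.1 this).2
    · rw [hH, hGeq, convexHull_insert h1, mem_convexJoin] at hr
      obtain ⟨p, hp, q, hq, hseg⟩ := hr
      rw [Set.mem_singleton_iff] at hp
      subst hp
      obtain ⟨θ, η, hθ, hη, hsum, heq⟩ := hseg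
      have hfst : θ • x₀ + η • q.1 = x₀ := congrArg Prod.fst heq
      have hsnd : θ • f x₀ + η • q.2 = r := congrArg Prod.snd heq
      simp only [smul_eq_mul] at hsnd
      rcases eq_or_lt_of_le hη with hη0 | hη0
      · have hθ1 : θ = 1 := by linarith
        rw [hθ1, ← hη0] at hsnd
        linarith
      · exfalso
        have hq1 : q.1 ∈ convexHull ℝ (closure Ω \ {x₀}) := by
          have h5 : q.1 ∈ convexHull ℝ
              ((LinearMap.fst ℝ (EuclideanSpace ℝ (Fin d)) ℝ) '' G₁) := by
            rw [← LinearMap.image_convexHull]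
            exact ⟨q, hq, rfl⟩
          refine convexHull_mono ?_ h5
          rintro y ⟨p', ⟨y', hy', rfl⟩, rfl⟩
          exact hy'
        have h6 : η • q.1 = η • x₀ := by
          have hθη : (1 : ℝ) - θ = η := by linarith
          calc η • q.1 = (θ • x₀ + η • q.1) - θ • x₀ := by abel
          _ = x₀ - θ • x₀ := by rw [hfst]
          _ = (1 - θ) • x₀ := by rw [sub_smul, one_smul]
          _ = η • x₀ := by rw [hθη]
        have hq1x : q.1 = x₀ := smul_right_injective _ (ne_of_gt hη0) h6
        exact hnot (hq1x ▸ hq1)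
  have hwx₀ : f x₀ ≤ w x₀ :=
    le_csInf (hne x₀ hx₀K) fun r hr => (hkey r hr).ge
  have h1 := hu_max w hwconv hwle x₀ hx₀K
  have h2 := hu_le x₀ hx₀K
  linarith
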